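/- Let (X,d) be a complete metric space, η : [0,∞) → [0,∞) with η(0) = 0, and φ : X → ℝ lower semicontinuous and bounded below on every bounded subset of X. Assume there exist x₀ ∈ X and a real a < 0 with liminf_{d(x,x₀)→∞} φ(x)/d(x,x₀) > a. Suppose t ↦ η(t) + a·t is nonnegative and nondecreasing on [0,∞), and liminf_{t→0⁺} η(t)/t ≥ −a. Then every mapping T : X → X satisfying η(d(x,Tx)) ≤ φ(x) − φ(Tx) for all x ∈ X has a fixed point. -/
import Mathlib


/-- Li's Theorem 2, case (ii). -/
theorem li_theorem2_case_ii {X : Type*} [MetricSpace X] [CompleteSpace X] [Nonempty X]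
    (η : ℝ → ℝ) (hη0 : η 0 = 0) (hηnn' : ∀ t, 0 ≤ t → 0 ≤ η t)
    (φ : X → ℝ) (hlsc : LowerSemicontinuous φ)
    (hbdd : ∀ S : Set X, Bornology.IsBounded S → BddBelow (φ '' S))
    (x₀ : X) (a : ℝ) (ha : a < 0)
    (hliminf : ∃ b > a, ∃ r > (0 : ℝ), ∀ x : X, r ≤ dist x x₀ → b ≤ φ x / dist x x₀)
    (hnn : ∀ t : ℝ, 0 ≤ t → 0 ≤ η t + a * t)
    (hmono : ∀ s t : ℝ, 0 ≤ s → s ≤ t → η s + a * s ≤ η t + a * t)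
    (hliminfη : ∀ c : ℝ, c < -a → ∃ δ > (0 : ℝ), ∀ t : ℝ, 0 < t → t < δ → c * t ≤ η t)
    (T : X → X) (hT : ∀ x, η (dist x (T x)) ≤ φ x - φ (T x)) :
    ∃ x, T x = x := by
  classical
  set c : ℝ := -a with hc_def
  have hc : 0 < c := by simp [hc_def]; linarith
  -- Caristi-type inequality with c
  have hkey : ∀ x : X, c * dist x (T x) ≤ φ x - φ (T x) := by
    intro x
    have h1 := hnn (dist x (T x)) dist_nonneg
    have h2 := hT x
    simp only [hc_def]; nlinarith
  -- The invariant set A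
  set A : Set X := {x | c * dist x x₀ ≤ φ x₀ - φ x} with hA_def
  have hx₀A : x₀ ∈ A := by simp [hA_def]
  have hTA : ∀ x ∈ A, T x ∈ A := by
    intro x hx
    have h1 : c * dist x x₀ ≤ φ x₀ - φ x := hx
    have h2 := hkey x
    have h3 : dist (T x) x₀ ≤ dist (T x) x + dist x x₀ := dist_triangle _ _ _
    have h4 : dist (T x) x = dist x (T x) := dist_comm _ _
    show c * dist (T x) x₀ ≤ φ x₀ - φ (T x)
    nlinarith [dist_nonneg (x := T x) (y := x₀)]
  -- A is bounded
  obtain ⟨b, hba, r, hr, hbr⟩ := hliminf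
  have hAbdd : Bornology.IsBounded A := by
    apply Bornology.IsBounded.subset (Metric.isBounded_closedBall
      (x := x₀) (r := max r (φ x₀ / (b - a))))
    intro x hx
    have h1 : c * dist x x₀ ≤ φ x₀ - φ x := hx
    simp only [Metric.mem_closedBall]
    rcases le_or_gt (dist x x₀) r with h | h
    · exact le_trans h (le_max_left _ _)
    · have hd : (0:ℝ) < dist x x₀ := lt_of_le_of_lt hr.le h
      have hb2 := hbr x h.le
      have hφ : b * dist x x₀ ≤ φ x := by
        rw [le_div_iff₀ hd] at hb2; linarith
      have hba' : 0 < b - a := by linarith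
      have : (b - a) * dist x x₀ ≤ φ x₀ := by simp only [hc_def] at h1; nlinarith
      have : dist x x₀ ≤ φ x₀ / (b - a) := (le_div_iff₀ hba').mpr (by linarith [this])
      exact le_trans this (le_max_right _ _)
  -- φ is bounded below on A
  obtain ⟨m₀, hm₀⟩ := hbdd A hAbdd
  have hm₀' : ∀ x ∈ A, m₀ ≤ φ x := fun x hx => hm₀ ⟨x, hx, rfl⟩
  -- the sets S x
  set S : X → Set X := fun x => {y | y ∈ A ∧ c * dist x y ≤ φ x - φ y} with hS_def
  have hmemS : ∀ x ∈ A, x ∈ S x := by intro x hx; exact ⟨hx, by simp⟩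
  have hSbdd : ∀ x : X, BddBelow (φ '' S x) := by
    intro x
    refine ⟨m₀, ?_⟩
    rintro z ⟨y, hy, rfl⟩
    exact hm₀' y hy.1
  -- recursive choice
  have hrec : ∀ (p : {x // x ∈ A}) (n : ℕ), ∃ y : {x // x ∈ A},
      (c * dist p.1 y.1 ≤ φ p.1 - φ y.1) ∧ φ y.1 < sInf (φ '' S p.1) + (1/2)^n := by
    intro p n
    have hne : (φ '' S p.1).Nonempty := ⟨φ p.1, Set.mem_image_of_mem _ (hmemS p.1 p.2)⟩
    have hlt : sInf (φ '' S p.1) < sInf (φ '' S p.1) + (1/2)^n := by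
      have : (0:ℝ) < (1/2)^n := by positivity
      linarith
    obtain ⟨z, hz, hzlt⟩ := exists_lt_of_csInf_lt hne hlt
    obtain ⟨y, hy, rfl⟩ := hz
    exact ⟨⟨y, hy.1⟩, hy.2, hzlt⟩
  choose f hf1 hf2 using hrec
  set u : ℕ → {x // x ∈ A} := fun n => Nat.rec ⟨x₀, hx₀A⟩ (fun n p => f p n) n with hu_def
  have hstep : ∀ n, u (n+1) = f (u n) n := fun n => rfl
  have hu0 : (u 0).1 = x₀ := rfl
  have huR : ∀ n, c * dist (u n).1 (u (n+1)).1 ≤ φ (u n).1 - φ (u (n+1)).1 := by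
    intro n; rw [hstep n]; exact hf1 (u n) n
  have huInf : ∀ n, φ (u (n+1)).1 < sInf (φ '' S (u n).1) + (1/2)^n := by
    intro n; rw [hstep n]; exact hf2 (u n) n
  -- chain inequality
  have hchain : ∀ n m, n ≤ m → c * dist (u n).1 (u m).1 ≤ φ (u n).1 - φ (u m).1 := by
    intro n m hnm
    induction m, hnm using Nat.le_induction with
    | base => simp
    | succ m hnm ih =>
      have h1 := huR m
      have h2 : dist (u n).1 (u (m+1)).1 ≤ dist (u n).1 (u m).1 + dist (u m).1 (u (m+1)).1 :=
        dist_triangle _ _ _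
      nlinarith
  have hanti : Antitone fun n => φ (u n).1 := by
    apply antitone_nat_of_succ_le
    intro n
    have h := huR n
    nlinarith [dist_nonneg (x := (u n).1) (y := (u (n+1)).1)]
  have hlb : ∀ n, m₀ ≤ φ (u n).1 := fun n => hm₀' _ (u n).2
  have hLbdd : BddBelow (Set.range fun n => φ (u n).1) := ⟨m₀, by rintro z ⟨n, rfl⟩; exact hlb n⟩
  set L : ℝ := ⨅ n, φ (u n).1 with hL_def
  have hten : Filter.Tendsto (fun n => φ (u n).1) Filter.atTop (nhds L) :=
    tendsto_atTop_ciInf hanti hLbdd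
  have hLle : ∀ n, L ≤ φ (u n).1 := fun n => ciInf_le hLbdd n
  -- Cauchy
  have hcauchy : CauchySeq (fun n => (u n).1) := by
    apply cauchySeq_of_le_tendsto_0 (b := fun N => (φ (u N).1 - L) / c)
    · intro n m N hn hm
      have key : ∀ i j, N ≤ i → i ≤ j → dist (u i).1 (u j).1 ≤ (φ (u N).1 - L) / c := by
        intro i j hi hij
        have h1 := hchain i j hij
        have h2 : φ (u i).1 ≤ φ (u N).1 := hanti hi
        have h3 := hLle j
        rw [le_div_iff₀ hc]; nlinarith
      rcases le_total n m with h | h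
      · exact key n m hn h
      · rw [dist_comm]; exact key m n hm h
    · have : Filter.Tendsto (fun N => (φ (u N).1 - L)) Filter.atTop (nhds (L - L)) :=
        hten.sub tendsto_const_nhds
      simpa using this.div_const c
  obtain ⟨z, hz⟩ := cauchySeq_tendsto_of_complete hcauchy
  -- lsc gives φ z ≤ L
  have hφzL : φ z ≤ L := by
    by_contra h
    push_neg at h
    have hy : L < φ z := h
    have hev := (hlsc z L hy).filter_mono (Filter.map_mono (le_refl _))
    have hev2 : ∀ᶠ n in Filter.atTop, L < φ (u n).1 := hz.eventually (hlsc z L hy)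
    -- from this and hten we get L ≤ L... need strict. Use midpoint.
    set y := (L + φ z)/2 with hy_def
    have hyz : y < φ z := by simp [hy_def]; linarith
    have hev3 : ∀ᶠ n in Filter.atTop, y < φ (u n).1 := hz.eventually (hlsc z y hyz)
    have : y ≤ L := ge_of_tendsto hten (hev3.mono fun n hn => hn.le)
    simp [hy_def] at this; linarith
  -- distance to limit
  have hdistz : ∀ n, c * dist (u n).1 z ≤ φ (u n).1 - L := by
    intro n
    have htend : Filter.Tendsto (fun m => c * dist (u n).1 (u m).1) Filter.atTop
        (nhds (c * dist (u n).1 z)) := (tendsto_const_nhds.mul ((Continuous.dist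
          continuous_const continuous_id).continuousAt.tendsto.comp hz))
    apply le_of_tendsto htend
    filter_upwards [Filter.eventually_ge_atTop n] with m hm
    have := hchain n m hm
    have := hLle m
    linarith [hchain n m hm, hLle m]
  -- z ∈ A
  have hzA : z ∈ A := by
    have h0 := hdistz 0
    rw [hu0] at h0
    show c * dist z x₀ ≤ φ x₀ - φ z
    rw [dist_comm]
    linarith
  -- T z ∈ S (u n)
  have hTz : ∀ n, (T z) ∈ S (u n).1 := by
    intro n
    refine ⟨hTA z hzA, ?_⟩
    have h1 := hdistz n
    have h2 := hkey z
    have h3 : dist (u n).1 (T z) ≤ dist (u n).1 z + dist z (T z) := dist_triangle _ _ _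
    nlinarith
  have hTzL : L ≤ φ (T z) := by
    have hbound : ∀ n, φ (u (n+1)).1 - (1/2)^n ≤ φ (T z) := by
      intro n
      have h1 : sInf (φ '' S (u n).1) ≤ φ (T z) :=
        csInf_le (hSbdd (u n).1) (Set.mem_image_of_mem _ (hTz n))
      have h2 := huInf n
      linarith
    have htend2 : Filter.Tendsto (fun n => φ (u (n+1)).1 - (1/2:ℝ)^n) Filter.atTop
        (nhds (L - 0)) := by
      apply Filter.Tendsto.sub
      · exact hten.comp (Filter.tendsto_add_atTop_nat 1)
      · exact tendsto_pow_atTop_nhds_zero_of_lt_one (by norm_num) (by norm_num)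
    have := le_of_tendsto htend2 (Filter.Eventually.of_forall hbound)
    linarith
  -- conclude
  have hfinal := hkey z
  have hd : dist z (T z) ≤ 0 := by nlinarith [dist_nonneg (x := z) (y := T z)]
  exact ⟨z, (dist_eq_zero.mp (le_antisymm hd dist_nonneg)).symm⟩
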